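/- Let D_i = {(p^k, x_i^k)}_{k=1}^{K}, i ∈ N, be a group dataset in which all agents face the same number K of observations with common, strictly positive prices p^k ∈ ℝ^m_{++}, and suppose there is an agent i* with x_{i*}^l < Σ_{i∈N} x_i^k (componentwise ≤ and ≠) for all k, l ∈ {1,…,K}. Let D_a = {(p^k, Σ_{i∈N} x_i^k)}_{k=1}^K be the aggregate dataset. Then D_a and every D_i are rationalizable if and only if there exist increasing, concave, continuous utilities u_i rationalizing D_i for each i ∈ N and v rationalizing D_a such that for every strictly positive price p ∈ ℝ^m_{++} and income I > 0 there exist bundles (x_i)_{i∈N} in ℝ^m_+ with (1) Σ_i x_i ∈ argmax{ v(z) : z ∈ ℝ^m_+, p·z ≤ I } and (2) x_i ∈ argmax{ u_i(z) : z ∈ ℝ^m_+, p·z ≤ p·x_i } for every i. -/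

import Mathlib

open Finset

/-- The dot product of two vectors in `ℝ^m`. -/
def dot {m : ℕ} (p x : Fin m → ℝ) : ℝ := ∑ j, p j * x j

/-- `x ≪ y`: strictly smaller in every component. -/
def StrLt {m : ℕ} (x y : Fin m → ℝ) : Prop := ∀ j, x j < y j

/-- An increasing utility on the nonnegative orthant. -/
def Incr {m : ℕ} (u : (Fin m → ℝ) → ℝ) : Prop :=
  (∀ x y : Fin m → ℝ, 0 ≤ x → x ≤ y → u x ≤ u y) ∧
  (∀ x y : Fin m → ℝ, 0 ≤ x → StrLt x y → u x < u y)

/-- `u` rationalizes the individual dataset `{(p k, x k)}` : `u` is increasing and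
any bundle strictly better than `x k` is more expensive at prices `p k`. -/
def Rationalizes {m K : ℕ} (p x : Fin K → Fin m → ℝ) (u : (Fin m → ℝ) → ℝ) : Prop :=
  Incr u ∧ ∀ k, ∀ z : Fin m → ℝ, 0 ≤ z → u (x k) < u z → dot (p k) (x k) < dot (p k) z

/-- Direct revealed preference. -/
def RP {m K : ℕ} (p x : Fin K → Fin m → ℝ) (a b : Fin m → ℝ) : Prop :=
  0 ≤ a ∧ 0 ≤ b ∧ (a = b ∨ ∃ k, x k ≤ a ∧ dot (p k) b ≤ dot (p k) (x k))

/-- Direct strict revealed preference. -/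
def SRP {m K : ℕ} (p x : Fin K → Fin m → ℝ) (a b : Fin m → ℝ) : Prop :=
  0 ≤ a ∧ 0 ≤ b ∧
    ((∃ a', StrLt a' a ∧ RP p x a' b) ∨ ∃ k, x k ≤ a ∧ dot (p k) b < dot (p k) (x k))

/-- Indirect revealed preference: the transitive closure of `RP`. -/
def IRP {m K : ℕ} (p x : Fin K → Fin m → ℝ) : (Fin m → ℝ) → (Fin m → ℝ) → Prop :=
  Relation.TransGen (RP p x)

/-- Indirect strict revealed preference: a finite `RP`-chain with at least one strict link. -/
def SIRP {m K : ℕ} (p x : Fin K → Fin m → ℝ) (a b : Fin m → ℝ) : Prop :=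
  ∃ c d, Relation.ReflTransGen (RP p x) a c ∧ SRP p x c d ∧ Relation.ReflTransGen (RP p x) d b

section dotlemmas
variable {m : ℕ}

lemma dot_nonneg {p z : Fin m → ℝ} (hp : 0 ≤ p) (hz : 0 ≤ z) : 0 ≤ dot p z :=
  Finset.sum_nonneg fun j _ => mul_nonneg (hp j) (hz j)

lemma dot_mono {p x y : Fin m → ℝ} (hp : 0 ≤ p) (hxy : x ≤ y) : dot p x ≤ dot p y :=
  Finset.sum_le_sum fun j _ => mul_le_mul_of_nonneg_left (hxy j) (hp j)

lemma StrLt.le {x y : Fin m → ℝ} (h : StrLt x y) : x ≤ y := fun j => (h j).le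

lemma dot_lt_dot (hm : 0 < m) {p x y : Fin m → ℝ} (hp : StrLt 0 p) (hxy : x ≤ y)
    (hne : x ≠ y) : dot p x < dot p y := by
  obtain ⟨j0, hj0⟩ : ∃ j, x j < y j := by
    by_contra h
    push_neg at h
    exact hne (funext fun j => le_antisymm (hxy j) (h j))
  have : ∀ j ∈ Finset.univ, p j * x j ≤ p j * y j :=
    fun j _ => mul_le_mul_of_nonneg_left (hxy j) (hp j).le
  exact Finset.sum_lt_sum this ⟨j0, Finset.mem_univ j0,
    (mul_lt_mul_iff_right₀ (hp j0)).2 hj0⟩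

lemma dot_strlt (hm : 0 < m) {p x y : Fin m → ℝ} (hp : StrLt 0 p) (hxy : StrLt x y) :
    dot p x < dot p y := by
  refine dot_lt_dot hm hp hxy.le fun h => ?_
  have := hxy ⟨0, hm⟩
  rw [h] at this
  exact lt_irrefl _ this

lemma dot_one_pos (hm : 0 < m) {p : Fin m → ℝ} (hp : StrLt 0 p) :
    0 < dot p (fun _ => 1) := by
  have : (0 : Fin m → ℝ) ≠ (fun _ => 1) := by
    intro h
    have := congrFun h ⟨0, hm⟩
    norm_num at this
  have h0 : (0 : Fin m → ℝ) ≤ fun _ => 1 := fun j => by norm_num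
  have := dot_lt_dot hm hp h0 this
  simpa [dot] using this

lemma dot_add_const {m : ℕ} (p z : Fin m → ℝ) (ε : ℝ) :
    dot p (fun j => z j + ε) = dot p z + ε * dot p (fun _ => 1) := by
  simp [dot, mul_add, Finset.sum_add_distrib, Finset.mul_sum, mul_comm]

lemma dot_eq_zero (hm : 0 < m) {p z : Fin m → ℝ} (hp : StrLt 0 p) (hz : 0 ≤ z)
    (h : dot p z ≤ 0) : z = 0 := by
  by_contra hne
  have : dot p 0 < dot p z := dot_lt_dot hm hp hz (fun h' => hne h'.symm)
  simp only [dot] at this h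
  simp at this
  linarith

lemma dot_combo {m : ℕ} (p x y : Fin m → ℝ) (a b : ℝ) :
    dot p (a • x + b • y) = a * dot p x + b * dot p y := by
  simp [dot, Finset.mul_sum, Finset.sum_add_distrib, mul_add]
  congr 1 <;> exact Finset.sum_congr rfl fun j _ => by ring

end dotlemmas

/-- Bump lemma: affordability with strict inequality forces strictly lower utility. -/
lemma ratl_lt {m : ℕ} (hm : 0 < m) {q y : Fin m → ℝ} {u : (Fin m → ℝ) → ℝ}
    (hu : Incr u) (hq : StrLt 0 q) (hy : 0 ≤ y)
    (hr : ∀ z : Fin m → ℝ, 0 ≤ z → u y < u z → dot q y < dot q z)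
    {z : Fin m → ℝ} (hz : 0 ≤ z) (hlt : dot q z < dot q y) : u z < u y := by
  set c : ℝ := dot q (fun _ => 1) with hc
  have hcpos : 0 < c := dot_one_pos hm hq
  set ε : ℝ := (dot q y - dot q z) / (2 * c) with he
  have hε : 0 < ε := div_pos (by linarith) (by linarith)
  set z' : Fin m → ℝ := fun j => z j + ε with hz'
  have hzz' : StrLt z z' := fun j => by simp [hz', hε]
  have hz'0 : 0 ≤ z' := fun j => le_trans (hz j) (hzz' j).le
  have hdz' : dot q z' < dot q y := by
    rw [hz', dot_add_const]
    have : ε * c = (dot q y - dot q z) / 2 := by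
      field_simp [he]
      rw [he]; field_simp
    rw [← hc, this]
    linarith
  have h1 : u z < u z' := hu.2 z z' hz hzz'
  have h2 : u z' ≤ u y := by
    by_contra h
    push_neg at h
    exact absurd (hr z' hz'0 h) (by linarith)
  linarith

/-- Existence of Afriat numbers, from a "potential" witnessing consistency. -/
lemma afriat_numbers {T : Type} [Fintype T] (a : T → T → ℝ) (φ : T → ℝ)
    (H1 : ∀ s t, a s t ≤ 0 → φ t ≤ φ s)
    (H2 : ∀ s t, a s t < 0 → φ t < φ s) :
    ∃ U lam : T → ℝ, (∀ t, 0 < lam t) ∧ ∀ s t, U s ≤ U t + lam t * a t s := by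
  suffices h : ∀ S : Finset T, ∃ U lam : T → ℝ, (∀ t, 0 < lam t) ∧
      ∀ s ∈ S, ∀ t ∈ S, U s ≤ U t + lam t * a t s by
    obtain ⟨U, lam, h1, h2⟩ := h univ
    exact ⟨U, lam, h1, fun s t => h2 s (mem_univ s) t (mem_univ t)⟩
  intro S
  induction S using Finset.strongInduction with
  | _ S IH =>
  classical
  rcases S.eq_empty_or_nonempty with hS | ⟨t1, ht1⟩
  · exact ⟨0, 1, fun t => one_pos, by simp [hS]⟩
  set rel : T → T → Prop := fun s t => s ∈ S ∧ t ∈ S ∧ a s t ≤ 0 with hrel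
  have chain_phi : ∀ {t s}, Relation.ReflTransGen rel t s → φ s ≤ φ t := by
    intro t s h
    induction h with
    | refl => exact le_rfl
    | tail h1 h2 ih => exact le_trans (H1 _ _ h2.2.2) ih
  set D : T → Finset T := fun t => S.filter (fun s => Relation.ReflTransGen rel t s) with hD
  obtain ⟨t0, ht0S, ht0min⟩ := S.exists_min_image (fun t => (D t).card) ⟨t1, ht1⟩
  set C : Finset T := D t0 with hC
  have hCsub : C ⊆ S := filter_subset _ _
  have ht0C : t0 ∈ C := mem_filter.2 ⟨ht0S, Relation.ReflTransGen.refl⟩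
  have hCne : C.Nonempty := ⟨t0, ht0C⟩
  have hdown : ∀ t ∈ C, ∀ s ∈ S, a t s ≤ 0 → s ∈ C := by
    intro t ht s hs hts
    rw [hC, hD, mem_filter] at ht ⊢
    exact ⟨hs, ht.2.tail ⟨hCsub (by rw [hC, hD]; exact mem_filter.2 ht), hs, hts⟩⟩
  have hmut : ∀ s ∈ C, ∀ t ∈ C, Relation.ReflTransGen rel t s := by
    intro s hsC t htC
    have h1 : D t ⊆ C := by
      intro z hz
      rcases mem_filter.1 hz with ⟨hzS, htz⟩
      rcases mem_filter.1 htC with ⟨htS, ht0t⟩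
      exact mem_filter.2 ⟨hzS, ht0t.trans htz⟩
    have h2 : (D t0).card ≤ (D t).card := ht0min t (hCsub htC)
    have h3 : D t = C := Finset.eq_of_subset_of_card_le h1 h2
    have : s ∈ D t := h3 ▸ hsC
    exact (mem_filter.1 this).2
  have hphiC : ∀ s ∈ C, ∀ t ∈ C, φ s = φ t := fun s hs t ht =>
    le_antisymm (chain_phi (hmut s hs t ht)) (chain_phi (hmut t ht s hs))
  have hCC : ∀ t ∈ C, ∀ s ∈ C, 0 ≤ a t s := by
    intro t ht s hs
    by_contra h
    push_neg at h
    have := H2 _ _ h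
    rw [hphiC s hs t ht] at this
    exact lt_irrefl _ this
  have hCS' : ∀ t ∈ C, ∀ s ∈ S, s ∉ C → 0 < a t s := by
    intro t ht s hs hsC
    by_contra h
    push_neg at h
    exact hsC (hdown t ht s hs h)
  set S' : Finset T := S \ C with hS'
  have hS'ss : S' ⊂ S :=
    Finset.sdiff_ssubset hCsub hCne
  obtain ⟨U0, lam0, hlam0, hIH⟩ := IH S' hS'ss
  by_cases hS'ne : S'.Nonempty
  · set uC : ℝ := S'.inf' hS'ne (fun r => U0 r + lam0 r * (C.inf' hCne (fun t => a r t)))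
      with huC
    have huC_le : ∀ r ∈ S', ∀ t ∈ C, uC ≤ U0 r + lam0 r * a r t := by
      intro r hr t ht
      refine le_trans (Finset.inf'_le _ hr) ?_
      have h := Finset.inf'_le (fun t' => a r t') ht
      nlinarith [hlam0 r]
    set lC : ℝ := 1 + (S'.sup' hS'ne fun s => C.sup' hCne fun t => (U0 s - uC) / a t s) ⊔ 0
      with hlC
    have hlCpos : 0 < lC := by
      have : (0:ℝ) ≤ (S'.sup' hS'ne fun s => C.sup' hCne fun t => (U0 s - uC) / a t s) ⊔ 0 :=
        le_max_right _ _
      rw [hlC]; linarith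
    have hlC_ge : ∀ t ∈ C, ∀ s ∈ S', U0 s ≤ uC + lC * a t s := by
      intro t ht s hs
      have hpos : 0 < a t s := hCS' t ht s (mem_sdiff.1 hs).1 (mem_sdiff.1 hs).2
      have h1 : (U0 s - uC) / a t s ≤ C.sup' hCne fun t' => (U0 s - uC) / a t' s :=
        Finset.le_sup' (fun t' => (U0 s - uC) / a t' s) ht
      have h2 : (C.sup' hCne fun t' => (U0 s - uC) / a t' s) ≤
          S'.sup' hS'ne fun s' => C.sup' hCne fun t' => (U0 s' - uC) / a t' s' :=
        Finset.le_sup' (fun s' => C.sup' hCne fun t' => (U0 s' - uC) / a t' s') hs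
      have h3 : (U0 s - uC) / a t s ≤ lC - 1 := by
        rw [hlC]
        have := le_max_left (S'.sup' hS'ne fun s' => C.sup' hCne fun t' => (U0 s' - uC) / a t' s') (0:ℝ)
        linarith
      have h4 : (U0 s - uC) / a t s ≤ lC := by linarith
      rw [div_le_iff₀ hpos] at h4
      linarith
    refine ⟨fun t => if t ∈ C then uC else U0 t, fun t => if t ∈ C then lC else lam0 t,
      fun t => ?_, fun s hsS t htS => ?_⟩
    · by_cases h : t ∈ C <;> simp [h, hlCpos, hlam0 t]
    · by_cases hsC : s ∈ C <;> by_cases htC : t ∈ C <;> simp [hsC, htC]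
      · nlinarith [hCC t htC s hsC, hlCpos]
      · exact huC_le t (mem_sdiff.2 ⟨htS, htC⟩) s hsC
      · exact hlC_ge t htC s (mem_sdiff.2 ⟨hsS, hsC⟩)
      · exact hIH s (mem_sdiff.2 ⟨hsS, hsC⟩) t (mem_sdiff.2 ⟨htS, htC⟩)
  · have hall : ∀ s ∈ S, s ∈ C := by
      intro s hs
      by_contra h
      exact hS'ne ⟨s, mem_sdiff.2 ⟨hs, h⟩⟩
    refine ⟨0, 1, fun t => one_pos, fun s hsS t htS => ?_⟩
    have := hCC t (hall t htS) s (hall s hsS)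
    simp
    linarith

lemma continuous_finset_inf' {X T : Type} [TopologicalSpace X] {s : Finset T}
    (hs : s.Nonempty) {f : T → X → ℝ} (hf : ∀ t, Continuous (f t)) :
    Continuous (fun z => s.inf' hs fun t => f t z) := by
  induction hs using Finset.Nonempty.cons_induction with
  | singleton a => simpa using hf a
  | cons a s ha hs ih =>
    have : (fun z => (Finset.cons a s ha).inf' (Finset.cons_nonempty ha) fun t => f t z)
        = fun z => min (f a z) (s.inf' hs fun t => f t z) := by
      funext z
      rw [Finset.inf'_cons]
    rw [this]
    exact (hf a).min ih

lemma convex_orthant {m : ℕ} : Convex ℝ {z : Fin m → ℝ | 0 ≤ z} := by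
  intro x hx y hy α β hα hβ hab
  intro j
  have := hx j
  have := hy j
  simp only [Pi.add_apply, Pi.smul_apply, smul_eq_mul, Pi.zero_apply]
  exact add_nonneg (mul_nonneg hα (hx j)) (mul_nonneg hβ (hy j))

lemma afriat_utility {m : ℕ} (hm : 0 < m) {T : Type} [Fintype T] [Nonempty T]
    (q y : T → Fin m → ℝ) (hq : ∀ t, StrLt 0 (q t))
    (φ : T → ℝ)
    (H1 : ∀ s t, dot (q s) (y t) ≤ dot (q s) (y s) → φ t ≤ φ s)
    (H2 : ∀ s t, dot (q s) (y t) < dot (q s) (y s) → φ t < φ s) :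
    ∃ u : (Fin m → ℝ) → ℝ, ConcaveOn ℝ {z : Fin m → ℝ | 0 ≤ z} u ∧
      ContinuousOn u {z : Fin m → ℝ | 0 ≤ z} ∧ Incr u ∧
      ∀ t, ∀ z : Fin m → ℝ, 0 ≤ z → u (y t) < u z → dot (q t) (y t) < dot (q t) z := by
  obtain ⟨U, lam, hlam, hAf⟩ := afriat_numbers (fun s t => dot (q s) (y t) - dot (q s) (y s)) φ
    (fun s t h => H1 s t (by
      have h' : dot (q s) (y t) - dot (q s) (y s) ≤ 0 := h
      linarith))
    (fun s t h => H2 s t (by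
      have h' : dot (q s) (y t) - dot (q s) (y s) < 0 := h
      linarith))
  set f : T → (Fin m → ℝ) → ℝ :=
    fun t z => U t + lam t * (dot (q t) z - dot (q t) (y t)) with hf
  set u : (Fin m → ℝ) → ℝ := fun z => univ.inf' univ_nonempty (fun t => f t z) with hu
  have hval : ∀ s, u (y s) = U s := by
    intro s
    refine le_antisymm ?_ ?_
    · have h0 : f s (y s) = U s := by simp [hf]
      have h := Finset.inf'_le (fun t => f t (y s)) (mem_univ s)
      rw [h0] at h
      exact h
    · refine Finset.le_inf' _ _ fun t _ => ?_
      have := hAf s t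
      simp only [hf]
      linarith
  have hle : ∀ t z, dot (q t) z ≤ dot (q t) (y t) → u z ≤ u (y t) := by
    intro t z hz
    rw [hval t]
    have h1 : u z ≤ f t z := Finset.inf'_le (fun t' => f t' z) (mem_univ t)
    have h2 : f t z ≤ U t := by
      simp only [hf]
      nlinarith [hlam t]
    linarith
  refine ⟨u, ?_, ?_, ?_, ?_⟩
  · refine ConcaveOn.subset ?_ (Set.subset_univ _) convex_orthant
    refine ⟨convex_univ, fun z1 _ z2 _ α β hα hβ hab => ?_⟩
    refine Finset.le_inf' _ _ fun t _ => ?_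
    have h1 : u z1 ≤ f t z1 := Finset.inf'_le (fun t' => f t' z1) (mem_univ t)
    have h2 : u z2 ≤ f t z2 := Finset.inf'_le (fun t' => f t' z2) (mem_univ t)
    have hd : dot (q t) (α • z1 + β • z2) = α * dot (q t) z1 + β * dot (q t) z2 :=
      dot_combo _ _ _ _ _
    simp only [smul_eq_mul]
    have e1 : α * u z1 ≤ α * f t z1 := mul_le_mul_of_nonneg_left h1 hα
    have e2 : β * u z2 ≤ β * f t z2 := mul_le_mul_of_nonneg_left h2 hβ
    have e3 : α * f t z1 + β * f t z2 = f t (α • z1 + β • z2) := by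
      simp only [hf]
      rw [hd]
      linear_combination (U t - lam t * dot (q t) (y t)) * hab
    calc α * u z1 + β * u z2 ≤ α * f t z1 + β * f t z2 := add_le_add e1 e2
      _ = f t (α • z1 + β • z2) := e3
  · refine Continuous.continuousOn ?_
    refine continuous_finset_inf' univ_nonempty fun t => ?_
    have hdc : Continuous fun z : Fin m → ℝ => dot (q t) z := by
      refine continuous_finset_sum _ fun j _ => ?_
      exact continuous_const.mul (continuous_apply j)
    show Continuous fun z => f t z
    simp only [hf]
    exact continuous_const.add (continuous_const.mul (hdc.sub continuous_const))
  · constructor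
    · intro z1 z2 h0 h12
      refine Finset.le_inf' _ _ fun t _ => ?_
      have h1 : u z1 ≤ f t z1 := Finset.inf'_le (fun t' => f t' z1) (mem_univ t)
      have hd : dot (q t) z1 ≤ dot (q t) z2 := dot_mono (fun j => (hq t j).le) h12
      have : f t z1 ≤ f t z2 := by
        simp only [hf]
        nlinarith [hlam t]
      linarith
    · intro z1 z2 h0 h12
      obtain ⟨t, _, ht⟩ := Finset.exists_mem_eq_inf' (univ_nonempty) (fun t' => f t' z2)
      have h1 : u z1 ≤ f t z1 := Finset.inf'_le (fun t' => f t' z1) (mem_univ t)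
      have hd : dot (q t) z1 < dot (q t) z2 := dot_strlt hm (hq t) h12
      have : f t z1 < f t z2 := by
        simp only [hf]
        nlinarith [hlam t]
      exact lt_of_le_of_lt h1 (this.trans_le ht.ge)
  · intro t z hz hlt
    by_contra h
    push_neg at h
    exact absurd (hle t z h) (not_le.2 hlt)

lemma potential {m : ℕ} (hm : 0 < m) {T : Type} (q y : T → Fin m → ℝ)
    (hq : ∀ t, StrLt 0 (q t)) (hy : ∀ t, 0 ≤ y t) {u : (Fin m → ℝ) → ℝ} (hu : Incr u)
    (hr : ∀ t, ∀ z : Fin m → ℝ, 0 ≤ z → u (y t) < u z → dot (q t) (y t) < dot (q t) z) :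
    (∀ s t, dot (q s) (y t) ≤ dot (q s) (y s) → u (y t) ≤ u (y s)) ∧
    (∀ s t, dot (q s) (y t) < dot (q s) (y s) → u (y t) < u (y s)) := by
  constructor
  · intro s t h
    by_contra hc
    push_neg at hc
    exact absurd (hr s (y t) (hy t) hc) (not_lt.2 h)
  · intro s t h
    exact ratl_lt hm hu (hq s) (hy s) (hr s) (hy t) h

lemma exists_maximizer {m : ℕ} (v : (Fin m → ℝ) → ℝ)
    (hv : ContinuousOn v {z : Fin m → ℝ | 0 ≤ z}) {pr : Fin m → ℝ} (hpr : StrLt 0 pr)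
    {I : ℝ} (hI : 0 < I) :
    ∃ X : Fin m → ℝ, 0 ≤ X ∧ dot pr X ≤ I ∧
      ∀ z : Fin m → ℝ, 0 ≤ z → dot pr z ≤ I → v z ≤ v X := by
  set B : Set (Fin m → ℝ) := {z | 0 ≤ z ∧ dot pr z ≤ I} with hB
  have hdc : Continuous fun z : Fin m → ℝ => dot pr z := by
    refine continuous_finset_sum _ fun j _ => ?_
    exact continuous_const.mul (continuous_apply j)
  have hBne : B.Nonempty := ⟨0, le_refl _, by simp [dot]; linarith⟩
  have hBsub : B ⊆ Set.Icc 0 (fun j => I / pr j) := by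
    rintro z ⟨hz0, hzI⟩
    refine ⟨hz0, fun j => ?_⟩
    have h1 : pr j * z j ≤ dot pr z := by
      refine Finset.single_le_sum (f := fun j' => pr j' * z j') ?_ (mem_univ j)
      exact fun j' _ => mul_nonneg (hpr j').le (hz0 j')
    rw [le_div_iff₀ (hpr j)]
    linarith [h1, hzI]
  have hBclosed : IsClosed B := by
    have h1 : IsClosed {z : Fin m → ℝ | 0 ≤ z} := isClosed_Ici
    have h2 : IsClosed {z : Fin m → ℝ | dot pr z ≤ I} := isClosed_le hdc continuous_const
    exact h1.inter h2
  have hBcomp : IsCompact B := (isCompact_Icc).of_isClosed_subset hBclosed hBsub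
  obtain ⟨X, hXB, hXmax⟩ := hBcomp.exists_isMaxOn hBne (hv.mono fun z hz => hz.1)
  exact ⟨X, hXB.1, hXB.2, fun z hz0 hzI => hXmax ⟨hz0, hzI⟩⟩

lemma linear_nice {m : ℕ} (hm : 0 < m) :
    ConcaveOn ℝ {z : Fin m → ℝ | 0 ≤ z} (fun z : Fin m → ℝ => dot (fun _ => (1:ℝ)) z) ∧
    ContinuousOn (fun z : Fin m → ℝ => dot (fun _ => (1:ℝ)) z) {z : Fin m → ℝ | 0 ≤ z} ∧
    Incr (fun z : Fin m → ℝ => dot (fun _ => (1:ℝ)) z) := by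
  have hone : StrLt (0 : Fin m → ℝ) (fun _ => 1) := fun j => one_pos
  refine ⟨⟨convex_orthant, fun z1 _ z2 _ α β hα hβ hab => ?_⟩, ?_, ?_, ?_⟩
  · simp only [smul_eq_mul]
    exact le_of_eq (dot_combo _ _ _ _ _).symm
  · refine Continuous.continuousOn ?_
    refine continuous_finset_sum _ fun j _ => ?_
    exact continuous_const.mul (continuous_apply j)
  · exact fun z1 z2 h0 h12 => dot_mono (fun j => zero_le_one) h12
  · exact fun z1 z2 h0 h12 => dot_strlt hm hone h12

/-- From a weak rationalizer, get a concave continuous one. -/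
lemma exists_nice {m K : ℕ} (hm : 0 < m) (p : Fin K → Fin m → ℝ) (hp : ∀ k, StrLt 0 (p k))
    (y : Fin K → Fin m → ℝ) (hy : ∀ k, 0 ≤ y k) (h : ∃ u, Rationalizes p y u) :
    ∃ u : (Fin m → ℝ) → ℝ, ConcaveOn ℝ {z : Fin m → ℝ | 0 ≤ z} u ∧
      ContinuousOn u {z : Fin m → ℝ | 0 ≤ z} ∧ Rationalizes p y u := by
  rcases Nat.eq_zero_or_pos K with hK | hK
  · subst hK
    obtain ⟨hc, hct, hi⟩ := linear_nice (m := m) hm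
    exact ⟨_, hc, hct, hi, fun k => k.elim0⟩
  · haveI : Nonempty (Fin K) := Fin.pos_iff_nonempty.1 hK
    obtain ⟨u0, hu0⟩ := h
    obtain ⟨H1, H2⟩ := potential hm p y hp hy hu0.1 hu0.2
    obtain ⟨u, hc, hct, hi, hr⟩ := afriat_utility hm p y hp (fun t => u0 (y t)) H1 H2
    exact ⟨u, hc, hct, hi, hr⟩

lemma exists_combined {m K : ℕ} (hm : 0 < m) {ι : Type} [Fintype ι]
    (p : Fin K → Fin m → ℝ) (hp : ∀ k, StrLt 0 (p k))
    (x : ι → Fin K → Fin m → ℝ) (hx : ∀ i k, 0 ≤ x i k) (istar : ι)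
    (hsmall : ∀ k l, x istar l ≤ (∑ i, x i k) ∧ x istar l ≠ (∑ i, x i k))
    (hA : ∃ v, Rationalizes p (fun k => ∑ i, x i k) v)
    (hB : ∃ u, Rationalizes p (x istar) u) :
    ∃ w : (Fin m → ℝ) → ℝ, ConcaveOn ℝ {z : Fin m → ℝ | 0 ≤ z} w ∧
      ContinuousOn w {z : Fin m → ℝ | 0 ≤ z} ∧
      Rationalizes p (fun k => ∑ i, x i k) w ∧ Rationalizes p (x istar) w := by
  rcases Nat.eq_zero_or_pos K with hK | hK
  · subst hK
    obtain ⟨hc, hct, hi⟩ := linear_nice (m := m) hm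
    exact ⟨_, hc, hct, ⟨hi, fun k => k.elim0⟩, ⟨hi, fun k => k.elim0⟩⟩
  · haveI : Nonempty (Fin K) := Fin.pos_iff_nonempty.1 hK
    obtain ⟨v0, hv0⟩ := hA
    obtain ⟨u0, hu0⟩ := hB
    set Xa : Fin K → Fin m → ℝ := fun k => ∑ i, x i k with hXa
    have hXa0 : ∀ k, 0 ≤ Xa k := fun k j => by
      simp only [hXa, Finset.sum_apply]
      exact Finset.sum_nonneg fun i _ => hx i k j
    obtain ⟨HA1, HA2⟩ := potential hm p Xa hp hXa0 hv0.1 hv0.2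
    obtain ⟨HI1, HI2⟩ := potential hm p (x istar) hp (fun k => hx istar k) hu0.1 hu0.2
    set mA : ℝ := univ.inf' univ_nonempty (fun k => v0 (Xa k)) with hmA
    set Mi : ℝ := univ.sup' univ_nonempty (fun k => u0 (x istar k)) with hMi
    have hb1 : ∀ t, u0 (x istar t) ≤ Mi :=
      fun t => Finset.le_sup' (fun k => u0 (x istar k)) (mem_univ t)
    have hb2 : ∀ s, mA ≤ v0 (Xa s) :=
      fun s => Finset.inf'_le (fun k => v0 (Xa k)) (mem_univ s)
    have hcross : ∀ s k t, dot (p s) (x istar t) < dot (p s) (Xa k) :=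
      fun s k t => dot_lt_dot hm (hp s) (hsmall k t).1 (hsmall k t).2
    set q : Fin K ⊕ Fin K → Fin m → ℝ := Sum.elim p p with hq
    set Y : Fin K ⊕ Fin K → Fin m → ℝ := Sum.elim Xa (x istar) with hY
    set φ : Fin K ⊕ Fin K → ℝ :=
      Sum.elim (fun k => v0 (Xa k) - mA + 1) (fun k => u0 (x istar k) - Mi) with hφ
    have H1 : ∀ s t, dot (q s) (Y t) ≤ dot (q s) (Y s) → φ t ≤ φ s := by
      rintro (s | s) (t | t) h
      · have := HA1 s t h
        simp only [hφ, Sum.elim_inl]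
        linarith
      · simp only [hφ, Sum.elim_inl, Sum.elim_inr]
        have := hb1 t
        have := hb2 s
        linarith
      · exact absurd h (not_le.2 (hcross s t s))
      · have := HI1 s t h
        simp only [hφ, Sum.elim_inr]
        linarith
    have H2 : ∀ s t, dot (q s) (Y t) < dot (q s) (Y s) → φ t < φ s := by
      rintro (s | s) (t | t) h
      · have := HA2 s t h
        simp only [hφ, Sum.elim_inl]
        linarith
      · simp only [hφ, Sum.elim_inl, Sum.elim_inr]
        have := hb1 t
        have := hb2 s
        linarith
      · exact absurd h (not_lt.2 (hcross s t s).le)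
      · have := HI2 s t h
        simp only [hφ, Sum.elim_inr]
        linarith
    obtain ⟨w, hc, hct, hi, hr⟩ := afriat_utility hm q Y
      (by rintro (t | t) <;> exact hp t) φ H1 H2
    exact ⟨w, hc, hct, ⟨hi, fun k z hz h => hr (Sum.inl k) z hz h⟩,
      ⟨hi, fun k z hz h => hr (Sum.inr k) z hz h⟩⟩


/-- A group dataset with common strictly positive prices and a "small"
agent `istar` admits rationalizations of the individual datasets and of the aggregate
dataset if and only if there are increasing, concave, continuous rationalizing utilities
`u i` and an aggregate utility `v` such that at every strictly positive price and income
there is an (endogenous-income) distribution of demand: the aggregate demand maximizes `v`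
on the aggregate budget and each `x i` maximizes `u i` on the budget it spans. -/
theorem stmt11 {m : ℕ} (hm : 0 < m) {ι : Type} [Fintype ι]
    (K : ℕ) (p : Fin K → Fin m → ℝ) (hp : ∀ k, StrLt 0 (p k))
    (x : ι → Fin K → Fin m → ℝ) (hx : ∀ i k, 0 ≤ x i k)
    (istar : ι)
    (hsmall : ∀ k l, x istar l ≤ (∑ i, x i k) ∧ x istar l ≠ (∑ i, x i k)) :
    ((∃ v : (Fin m → ℝ) → ℝ, Rationalizes p (fun k => ∑ i, x i k) v) ∧
      (∀ i, ∃ u : (Fin m → ℝ) → ℝ, Rationalizes p (x i) u))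
    ↔ ∃ (u : ι → (Fin m → ℝ) → ℝ) (v : (Fin m → ℝ) → ℝ),
        (∀ i, ConcaveOn ℝ {z : Fin m → ℝ | 0 ≤ z} (u i) ∧
          ContinuousOn (u i) {z : Fin m → ℝ | 0 ≤ z} ∧ Rationalizes p (x i) (u i)) ∧
        (ConcaveOn ℝ {z : Fin m → ℝ | 0 ≤ z} v ∧
          ContinuousOn v {z : Fin m → ℝ | 0 ≤ z} ∧ Rationalizes p (fun k => ∑ i, x i k) v) ∧
        (∀ pr : Fin m → ℝ, StrLt 0 pr → ∀ I : ℝ, 0 < I →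
          ∃ xx : ι → Fin m → ℝ, (∀ i, 0 ≤ xx i) ∧
            (dot pr (∑ i, xx i) ≤ I ∧
              ∀ z : Fin m → ℝ, 0 ≤ z → dot pr z ≤ I → v z ≤ v (∑ i, xx i)) ∧
            (∀ i, ∀ z : Fin m → ℝ, 0 ≤ z → dot pr z ≤ dot pr (xx i) →
              u i z ≤ u i (xx i))) := by
  classical
  constructor
  · rintro ⟨hA, hAll⟩
    obtain ⟨w, hwc, hwct, hwA, hwI⟩ := exists_combined hm p hp x hx istar hsmall hA (hAll istar)
    have hEx : ∀ i, ∃ u' : (Fin m → ℝ) → ℝ, ConcaveOn ℝ {z : Fin m → ℝ | 0 ≤ z} u' ∧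
        ContinuousOn u' {z : Fin m → ℝ | 0 ≤ z} ∧ Rationalizes p (x i) u' :=
      fun i => exists_nice hm p hp (x i) (hx i) (hAll i)
    choose u0 hu0 using hEx
    refine ⟨fun i => if i = istar then w else u0 i, w, ?_, ⟨hwc, hwct, hwA⟩, ?_⟩
    · intro i
      by_cases h : i = istar
      · subst h
        simp only [if_pos rfl]
        exact ⟨hwc, hwct, hwI⟩
      · simp only [if_neg h]
        exact hu0 i
    · intro pr hpr I hI
      obtain ⟨X, hX0, hXI, hXmax⟩ := exists_maximizer w hwct hpr hI
      have hsum : (∑ i, if i = istar then X else 0) = X := by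
        rw [Finset.sum_ite_eq' univ istar (fun _ => X)]
        simp
      refine ⟨fun i => if i = istar then X else 0, ?_, ?_, ?_⟩
      · intro i
        by_cases h : i = istar <;> simp [h, hX0]
      · rw [hsum]
        exact ⟨hXI, hXmax⟩
      · intro i z hz hzb
        by_cases h : i = istar
        · subst h
          simp only [if_pos rfl] at hzb ⊢
          exact hXmax z hz (le_trans hzb hXI)
        · simp only [if_neg h] at hzb ⊢
          have h0 : dot pr z ≤ 0 := by simpa [dot] using hzb
          rw [dot_eq_zero hm hpr hz h0]
  · rintro ⟨u, v, hu, hv, _⟩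
    exact ⟨⟨v, hv.2.2⟩, fun i => ⟨u i, (hu i).2.2⟩⟩
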